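/- arXiv:2510.26986 — 3 statements merged into one kernel-verified Lean document; each statement's English description precedes it below -/
import Mathlib

section
/- Let Φ : ℝ³ → ℝ³ be a C² diffeomorphism and let Ê : ℝ³ → ℝ³ be a C¹ vector field. Define the 1-form push-forward E(x) := (DΦ(Φ⁻¹(x)))⁻ᵀ Ê(Φ⁻¹(x)). Then for every x̂ ∈ ℝ³, (curl E)(Φ(x̂)) = DΦ(x̂) (curl Ê)(x̂) / det DΦ(x̂); that is, the curl of the 1-form push-forward equals the 2-form push-forward of the curl. -/
open MeasureTheory Matrix RealInnerProductSpace

noncomputable section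

/-- Points/vectors in ℝ³. -/
abbrev V3 : Type := Fin 3 → ℝ

/-- Partial derivative ∂ᵢ of a scalar function on ℝ³. -/
def pder (i : Fin 3) (f : V3 → ℝ) (x : V3) : ℝ :=
  fderiv ℝ f x (Pi.single i 1)

/-- Gradient of a scalar function on ℝ³. -/
def grad (f : V3 → ℝ) (x : V3) : V3 :=
  fun i => pder i f x

/-- Curl of a vector field on ℝ³. -/
def curl (F : V3 → V3) (x : V3) : V3 :=
  ![pder 1 (fun y => F y 2) x - pder 2 (fun y => F y 1) x,
    pder 2 (fun y => F y 0) x - pder 0 (fun y => F y 2) x,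
    pder 0 (fun y => F y 1) x - pder 1 (fun y => F y 0) x]

/-- Divergence of a vector field on ℝ³. -/
def dvg (F : V3 → V3) (x : V3) : ℝ :=
  pder 0 (fun y => F y 0) x + pder 1 (fun y => F y 1) x + pder 2 (fun y => F y 2) x

/-- Cross product on ℝ³. -/
def cross (a b : V3) : V3 :=
  ![a 1 * b 2 - a 2 * b 1, a 2 * b 0 - a 0 * b 2, a 0 * b 1 - a 1 * b 0]

/-- Euclidean dot product on ℝ³. -/
def dot (a b : V3) : ℝ := ∑ i, a i * b i

/-- Jacobian matrix (DΦ(x))ᵢⱼ = ∂Φᵢ/∂xⱼ. -/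
def jac (Φ : V3 → V3) (x : V3) : Matrix (Fin 3) (Fin 3) ℝ :=
  Matrix.of fun i j => pder j (fun y => Φ y i) x

lemma fderiv_apply_eq_sum (f : V3 → ℝ) (x v : V3) :
    fderiv ℝ f x v = ∑ l, v l * pder l f x := by
  have hv : v = ∑ l, v l • (Pi.single l 1 : V3) := by
    funext j
    rw [Finset.sum_apply]
    simp [Pi.single_apply]
  conv_lhs => rw [hv]
  rw [map_sum]
  exact Finset.sum_congr rfl fun l _ => by rw [_root_.map_smul]; rfl

lemma fderiv_pi_apply (F : V3 → V3) (x : V3) (hF : DifferentiableAt ℝ F x) (w : V3) (l : Fin 3) :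
    fderiv ℝ F x w l = fderiv ℝ (fun y => F y l) x w := by
  have h : HasFDerivAt (fun y => F y l)
      ((ContinuousLinearMap.proj (R := ℝ) (φ := fun _ : Fin 3 => ℝ) l).comp (fderiv ℝ F x)) x := by
    exact (ContinuousLinearMap.proj (R := ℝ) (φ := fun _ : Fin 3 => ℝ) l).hasFDerivAt.comp x
      hF.hasFDerivAt
  rw [h.fderiv]
  rfl

lemma pder_comp (f : V3 → ℝ) (F : V3 → V3) (i : Fin 3) (x : V3)
    (hf : DifferentiableAt ℝ f (F x)) (hF : DifferentiableAt ℝ F x) :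
    pder i (fun y => f (F y)) x = ∑ l, pder l f (F x) * pder i (fun y => F y l) x := by
  have h : HasFDerivAt (fun y => f (F y)) ((fderiv ℝ f (F x)).comp (fderiv ℝ F x)) x := by
    exact hf.hasFDerivAt.comp x hF.hasFDerivAt
  show fderiv ℝ (fun y => f (F y)) x (Pi.single i 1) = _
  rw [h.fderiv]
  show fderiv ℝ f (F x) (fderiv ℝ F x (Pi.single i 1)) = _
  rw [fderiv_apply_eq_sum]
  exact Finset.sum_congr rfl fun l _ => by
    rw [fderiv_pi_apply F x hF _ l]; exact mul_comm _ _

lemma pder_mul (f g : V3 → ℝ) (i : Fin 3) (x : V3)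
    (hf : DifferentiableAt ℝ f x) (hg : DifferentiableAt ℝ g x) :
    pder i (fun y => f y * g y) x = pder i f x * g x + f x * pder i g x := by
  simp only [pder]
  rw [fderiv_fun_mul hf hg]
  simp only [ContinuousLinearMap.add_apply, ContinuousLinearMap.smul_apply, smul_eq_mul]
  ring

lemma pder_sum3 (f : Fin 3 → V3 → ℝ) (i : Fin 3) (x : V3)
    (hf : ∀ k, DifferentiableAt ℝ (f k) x) :
    pder i (fun y => ∑ k, f k y) x = ∑ k, pder i (f k) x := by
  simp only [pder]
  rw [fderiv_fun_sum fun k _ => hf k]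
  simp

lemma pder_comm (f : V3 → ℝ) (hf : ContDiff ℝ 2 f) (i j : Fin 3) (x : V3) :
    pder i (fun y => pder j f y) x = pder j (fun y => pder i f y) x := by
  have hdf : ContDiff ℝ 1 (fderiv ℝ f) := hf.fderiv_right (by norm_num)
  have hdiff : Differentiable ℝ f := hf.differentiable (by norm_num)
  have hdd : DifferentiableAt ℝ (fderiv ℝ f) x := (hdf.differentiable one_ne_zero) x
  have key := second_derivative_symmetric (f := f) (f' := fderiv ℝ f)
      (f'' := fderiv ℝ (fderiv ℝ f) x)
      (fun y => (hdiff y).hasFDerivAt) hdd.hasFDerivAt (Pi.single j 1) (Pi.single i 1)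
  have expand : ∀ (a b : Fin 3),
      pder a (fun y => pder b f y) x
        = fderiv ℝ (fderiv ℝ f) x (Pi.single a 1) (Pi.single b 1) := by
    intro a b
    show fderiv ℝ (fun y => (fderiv ℝ f y) (Pi.single b 1)) x (Pi.single a 1) = _
    rw [fderiv_clm_apply hdd (differentiableAt_const _)]
    simp
  rw [expand i j, expand j i]
  exact key.symm

lemma pder_id (i j : Fin 3) (z : V3) :
    pder j (fun y : V3 => y i) z = if i = j then 1 else 0 := by
  have h : fderiv ℝ (fun y : V3 => y i) z
      = ContinuousLinearMap.proj (R := ℝ) (φ := fun _ : Fin 3 => ℝ) i := by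
    exact (ContinuousLinearMap.proj (R := ℝ) (φ := fun _ : Fin 3 => ℝ) i).fderiv
  simp only [pder, h]
  show (Pi.single j 1 : V3) i = _
  rw [Pi.single_apply]

set_option maxHeartbeats 1000000 in
/-- the curl of the 1-form push-forward equals the 2-form
push-forward of the curl. -/
theorem pushforward_one_form_curl
    (Φ Ψ : V3 → V3) (hΦ : ContDiff ℝ 2 Φ) (hΨ : ContDiff ℝ 2 Ψ)
    (hleft : Function.LeftInverse Ψ Φ) (hright : Function.RightInverse Ψ Φ)
    (Ehat : V3 → V3) (hEhat : ContDiff ℝ 1 Ehat)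
    (E : V3 → V3)
    (hE : E = fun x => ((jac Φ (Ψ x))⁻¹)ᵀ.mulVec (Ehat (Ψ x))) :
    ∀ xhat : V3,
      curl E (Φ xhat)
        = ((jac Φ xhat).det)⁻¹ • (jac Φ xhat).mulVec (curl Ehat xhat) := by
  -- basic differentiability facts
  have hΦd : Differentiable ℝ Φ := hΦ.differentiable (by norm_num)
  have hΨd : Differentiable ℝ Ψ := hΨ.differentiable (by norm_num)
  have hΨc : ∀ k : Fin 3, ContDiff ℝ 2 (fun y => Ψ y k) := fun k => contDiff_pi.mp hΨ k
  have hΦc : ∀ k : Fin 3, ContDiff ℝ 2 (fun y => Φ y k) := fun k => contDiff_pi.mp hΦ k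
  have hEck : ∀ k : Fin 3, ContDiff ℝ 1 (fun y => Ehat y k) := fun k => contDiff_pi.mp hEhat k
  have hΨcd : ∀ k : Fin 3, Differentiable ℝ (fun y => Ψ y k) :=
    fun k => (hΨc k).differentiable (by norm_num)
  have hΦcd : ∀ k : Fin 3, Differentiable ℝ (fun y => Φ y k) :=
    fun k => (hΦc k).differentiable (by norm_num)
  have hEd : ∀ k : Fin 3, Differentiable ℝ (fun y => Ehat y k) :=
    fun k => (hEck k).differentiable one_ne_zero
  have hΨ1 : ContDiff ℝ 1 Ψ := hΨ.of_le (by norm_num)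
  have hpd : ∀ (j k : Fin 3), ContDiff ℝ 1 (fun x => pder j (fun y => Ψ y k) x) := by
    intro j k
    exact ((hΨc k).fderiv_right (by norm_num)).clm_apply contDiff_const
  have hpdd : ∀ (j k : Fin 3), Differentiable ℝ (fun x => pder j (fun y => Ψ y k) x) :=
    fun j k => (hpd j k).differentiable one_ne_zero
  have hgd : ∀ k : Fin 3, Differentiable ℝ (fun x => Ehat (Ψ x) k) :=
    fun k => (contDiff_pi.mp (hEhat.comp hΨ1) k).differentiable one_ne_zero
  -- jacobian inverse identities
  have hBA : ∀ z : V3, jac Ψ z * jac Φ (Ψ z) = 1 := by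
    intro z
    ext i j
    rw [Matrix.mul_apply]
    simp only [jac, Matrix.of_apply]
    have hch := pder_comp (fun y => Ψ y i) Φ j (Ψ z) (by exact hΨcd i _) (hΦd _)
    rw [hright z] at hch
    have hid : (fun y => Ψ (Φ y) i) = fun y : V3 => y i := funext fun y => by rw [hleft y]
    rw [hid] at hch
    rw [← hch, pder_id, Matrix.one_apply]
  have hAB : ∀ z : V3, jac Φ (Ψ z) * jac Ψ z = 1 := by
    intro z
    ext i j
    rw [Matrix.mul_apply]
    simp only [jac, Matrix.of_apply]
    have hch := pder_comp (fun y => Φ y i) Ψ j z (by exact hΦcd i _) (hΨd _)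
    have hid : (fun y => Φ (Ψ y) i) = fun y : V3 => y i := funext fun y => by rw [hright y]
    rw [hid] at hch
    rw [← hch, pder_id, Matrix.one_apply]
  have hinv : ∀ x : V3, (jac Φ (Ψ x))⁻¹ = jac Ψ x := fun x => Matrix.inv_eq_left_inv (hBA x)
  -- component formula for E
  have hEc2 : ∀ (x : V3) (j : Fin 3),
      E x j = ∑ k, pder j (fun y => Ψ y k) x * Ehat (Ψ x) k := by
    intro x j
    rw [hE]
    show (((jac Φ (Ψ x))⁻¹)ᵀ.mulVec (Ehat (Ψ x))) j = _
    rw [hinv x]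
    simp only [Matrix.mulVec, dotProduct, Matrix.transpose_apply, jac, Matrix.of_apply]
  intro xhat
  -- the key derivative computation
  have hD : ∀ a b : Fin 3,
      pder a (fun x => E x b) (Φ xhat)
        = ∑ k, (pder a (fun x => pder b (fun y => Ψ y k) x) (Φ xhat) * Ehat xhat k
            + pder b (fun y => Ψ y k) (Φ xhat)
              * ∑ l, pder l (fun y => Ehat y k) xhat * pder a (fun y => Ψ y l) (Φ xhat)) := by
    intro a b
    have hfun : (fun x => E x b) = fun x => ∑ k, pder b (fun y => Ψ y k) x * Ehat (Ψ x) k :=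
      funext fun x => hEc2 x b
    calc pder a (fun x => E x b) (Φ xhat)
        = pder a (fun x => ∑ k, pder b (fun y => Ψ y k) x * Ehat (Ψ x) k) (Φ xhat) := by
          rw [hfun]
      _ = ∑ k, pder a (fun x => pder b (fun y => Ψ y k) x * Ehat (Ψ x) k) (Φ xhat) :=
          pder_sum3 _ a _ (fun k => ((hpdd b k).mul (hgd k)) _)
      _ = ∑ k, (pder a (fun x => pder b (fun y => Ψ y k) x) (Φ xhat) * Ehat (Ψ (Φ xhat)) k
            + pder b (fun y => Ψ y k) (Φ xhat) * pder a (fun x => Ehat (Ψ x) k) (Φ xhat)) :=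
          Finset.sum_congr rfl fun k _ =>
            pder_mul (fun x => pder b (fun y => Ψ y k) x) (fun x => Ehat (Ψ x) k) a _
              ((hpdd b k) _) ((hgd k) _)
      _ = _ := by
          refine Finset.sum_congr rfl fun k _ => ?_
          have hcomp : pder a (fun x => Ehat (Ψ x) k) (Φ xhat)
              = ∑ l, pder l (fun y => Ehat y k) (Ψ (Φ xhat)) * pder a (fun y => Ψ y l) (Φ xhat) :=
            pder_comp (fun y => Ehat y k) Ψ a (Φ xhat) ((hEd k) _) (hΨd _)
          rw [hcomp, hleft xhat]
  -- curl components
  have hcurlE : ∀ a b : Fin 3,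
      pder a (fun y => E y b) (Φ xhat) - pder b (fun y => E y a) (Φ xhat)
        = ∑ k, ∑ l,
            (pder b (fun y => Ψ y k) (Φ xhat) * pder l (fun y => Ehat y k) xhat
                * pder a (fun y => Ψ y l) (Φ xhat)
              - pder a (fun y => Ψ y k) (Φ xhat) * pder l (fun y => Ehat y k) xhat
                * pder b (fun y => Ψ y l) (Φ xhat)) := by
    intro a b
    rw [hD a b, hD b a]
    have hsym : ∀ k : Fin 3,
        pder a (fun x => pder b (fun y => Ψ y k) x) (Φ xhat)
          = pder b (fun x => pder a (fun y => Ψ y k) x) (Φ xhat) :=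
      fun k => pder_comm _ (hΨc k) a b (Φ xhat)
    rw [← Finset.sum_sub_distrib]
    refine Finset.sum_congr rfl fun k _ => ?_
    rw [hsym k, Finset.mul_sum, Finset.mul_sum,
      show ∀ (t u v : ℝ), t + u - (t + v) = u - v from fun t u v => by ring,
      ← Finset.sum_sub_distrib]
    refine Finset.sum_congr rfl fun l _ => by ring
  -- rewrite RHS using adjugate of B = jac Ψ (Φ xhat)
  have hABx : jac Φ xhat * jac Ψ (Φ xhat) = 1 := by
    have := hAB (Φ xhat)
    rwa [hleft xhat] at this
  have hBAx : jac Ψ (Φ xhat) * jac Φ xhat = 1 := by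
    have := hBA (Φ xhat)
    rwa [hleft xhat] at this
  have hdet : ((jac Φ xhat).det)⁻¹ = (jac Ψ (Φ xhat)).det := by
    refine inv_eq_of_mul_eq_one_right ?_
    rw [← Matrix.det_mul, hABx, Matrix.det_one]
  have hadj : (jac Ψ (Φ xhat)).adjugate = (jac Ψ (Φ xhat)).det • jac Φ xhat := by
    calc (jac Ψ (Φ xhat)).adjugate
        = (jac Ψ (Φ xhat)).adjugate * (jac Ψ (Φ xhat) * jac Φ xhat) := by
          rw [hBAx, Matrix.mul_one]
      _ = ((jac Ψ (Φ xhat)).adjugate * jac Ψ (Φ xhat)) * jac Φ xhat := by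
          rw [Matrix.mul_assoc]
      _ = ((jac Ψ (Φ xhat)).det • (1 : Matrix (Fin 3) (Fin 3) ℝ)) * jac Φ xhat := by
          rw [Matrix.adjugate_mul]
      _ = (jac Ψ (Φ xhat)).det • jac Φ xhat := by
          rw [Matrix.smul_mul, Matrix.one_mul]
  have hRHS : ((jac Φ xhat).det)⁻¹ • (jac Φ xhat).mulVec (curl Ehat xhat)
      = ((jac Ψ (Φ xhat)).adjugate).mulVec (curl Ehat xhat) := by
    rw [hdet, hadj, Matrix.smul_mulVec]
  rw [hRHS]
  funext m
  fin_cases m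
  · show pder 1 (fun y => E y 2) (Φ xhat) - pder 2 (fun y => E y 1) (Φ xhat)
      = ((jac Ψ (Φ xhat)).adjugate.mulVec (curl Ehat xhat)) 0
    rw [hcurlE 1 2]
    simp only [Matrix.adjugate_fin_three, Matrix.mulVec, dotProduct, Fin.sum_univ_three, jac,
      Matrix.of_apply, curl, Matrix.cons_val', Matrix.cons_val_zero, Matrix.cons_val_one,
      Matrix.head_cons, Matrix.cons_val_two, Matrix.tail_cons, Matrix.empty_val',
      Matrix.cons_val_fin_one, Matrix.head_fin_const]
    ring
  · show pder 2 (fun y => E y 0) (Φ xhat) - pder 0 (fun y => E y 2) (Φ xhat)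
      = ((jac Ψ (Φ xhat)).adjugate.mulVec (curl Ehat xhat)) 1
    rw [hcurlE 2 0]
    simp only [Matrix.adjugate_fin_three, Matrix.mulVec, dotProduct, Fin.sum_univ_three, jac,
      Matrix.of_apply, curl, Matrix.cons_val', Matrix.cons_val_zero, Matrix.cons_val_one,
      Matrix.head_cons, Matrix.cons_val_two, Matrix.tail_cons, Matrix.empty_val',
      Matrix.cons_val_fin_one, Matrix.head_fin_const]
    ring
  · show pder 0 (fun y => E y 1) (Φ xhat) - pder 1 (fun y => E y 0) (Φ xhat)
      = ((jac Ψ (Φ xhat)).adjugate.mulVec (curl Ehat xhat)) 2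
    rw [hcurlE 0 1]
    simp only [Matrix.adjugate_fin_three, Matrix.mulVec, dotProduct, Fin.sum_univ_three, jac,
      Matrix.of_apply, curl, Matrix.cons_val', Matrix.cons_val_zero, Matrix.cons_val_one,
      Matrix.head_cons, Matrix.cons_val_two, Matrix.tail_cons, Matrix.empty_val',
      Matrix.cons_val_fin_one, Matrix.head_fin_const]
    ring

end
end

section
/- Let H be a real inner product space, let J, B ∈ H, let η ≥ 0 and a ≥ 0. Define the resistive helicity variation δH := −2η⟨J, B⟩ and the resistive energy variation δE := −a − η‖J‖². Then |δH|² ≤ 8η · E(B) · |δE|, where E(B) := ½‖B‖². (With J the current, a = (J×B, 𝒜(J×B)) ≥ 0 the ideal dissipation for a positive semi-definite operator 𝒜, and η the resistivity, this gives the bound |δH|² ≤ 8η E(B) |δE| of order √η on the helicity loss during resistive relaxation.) -/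
open MeasureTheory Matrix RealInnerProductSpace

noncomputable section

/-- bound on the helicity loss during resistive relaxation:
|δH|² ≤ 8η·E(B)·|δE|. -/
theorem resistive_helicity_loss_bound
    {H : Type*} [NormedAddCommGroup H] [InnerProductSpace ℝ H]
    (J B : H) (η a : ℝ) (hη : 0 ≤ η) (ha : 0 ≤ a)
    (δH δE : ℝ)
    (hδH : δH = -2 * η * (inner ℝ J B : ℝ))
    (hδE : δE = -a - η * ‖J‖ ^ 2) :
    |δH| ^ 2 ≤ 8 * η * (1 / 2 * ‖B‖ ^ 2) * |δE| := by
  have hcs : |(inner ℝ J B : ℝ)| ≤ ‖J‖ * ‖B‖ := abs_real_inner_le_norm J B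
  have h1 : |δH| ^ 2 = 4 * η ^ 2 * |(inner ℝ J B : ℝ)| ^ 2 := by
    rw [hδH]; rw [abs_mul, abs_mul]
    rw [abs_of_nonpos (by norm_num : (-2:ℝ) ≤ 0), abs_of_nonneg hη]
    ring
  have h2 : |δE| = a + η * ‖J‖ ^ 2 := by
    have : -a - η * ‖J‖ ^ 2 ≤ 0 := by nlinarith [mul_nonneg hη (sq_nonneg ‖J‖)]
    rw [hδE, abs_of_nonpos this]; ring
  rw [h1, h2]
  have h3 : |(inner ℝ J B : ℝ)| ^ 2 ≤ ‖J‖ ^ 2 * ‖B‖ ^ 2 := by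
    calc |(inner ℝ J B : ℝ)| ^ 2 ≤ (‖J‖ * ‖B‖) ^ 2 := by
          apply pow_le_pow_left₀ (abs_nonneg _) hcs
      _ = ‖J‖ ^ 2 * ‖B‖ ^ 2 := by ring
  nlinarith [sq_nonneg η, mul_nonneg hη (sq_nonneg ‖B‖), mul_nonneg (mul_nonneg hη (sq_nonneg ‖B‖)) ha, mul_nonneg (mul_nonneg (mul_nonneg hη hη) (sq_nonneg ‖J‖)) (sq_nonneg ‖B‖)]

end
end

section
/- Let U ⊆ ℝ³ be open, let Φ : U → ℝ³ be a C¹ diffeomorphism onto its image with det DΦ(x̂) > 0 for all x̂ ∈ U, let B̂ : U → ℝ³ be continuous with DΦ(x̂) B̂(x̂) ≠ 0 for all x̂ ∈ U, and define the 2-form push-forward B(Φ(x̂)) := DΦ(x̂) B̂(x̂) / det DΦ(x̂). Let x̂ : I → U be a differentiable curve such that the physical curve x_t := Φ(x̂_t) is an arc-length-parametrized integral curve of B, i.e. d x_t/dt = B(x_t)/|B(x_t)| for all t ∈ I. Then the logical curve satisfies d x̂_t/dt = B̂(x̂_t) / |DΦ(x̂_t) B̂(x̂_t)| for all t ∈ I.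 -/
open MeasureTheory Matrix RealInnerProductSpace

noncomputable section

/-- Euclidean norm on ℝ³. -/
def eucNorm (a : V3) : ℝ := Real.sqrt (dot a a)


lemma jac_mulVec_eq (Φ : V3 → V3) (x : V3) (L : V3 →L[ℝ] V3)
    (h : HasFDerivAt Φ L x) (v : V3) : (jac Φ x).mulVec v = L v := by
  funext i
  have hc : ∀ j : Fin 3, jac Φ x i j = L (Pi.single j 1) i := by
    intro j
    have h1 : HasFDerivAt (fun y => Φ y i)
        ((ContinuousLinearMap.proj i).comp L) x :=
      (ContinuousLinearMap.proj (R := ℝ) (φ := fun _ : Fin 3 => ℝ) i).hasFDerivAt.comp x h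
    simp [jac, pder, h1.fderiv]
  have hv : v = ∑ j, v j • (Pi.single j 1 : V3) := by
    funext k
    simp [Pi.single_apply, Finset.sum_apply, mul_comm]
  calc (jac Φ x).mulVec v i = ∑ j, v j • L (Pi.single j 1) i := by
        simp [Matrix.mulVec, dotProduct, hc, mul_comm, smul_eq_mul]
    _ = L v i := by
        conv_rhs => rw [hv]
        simp [Finset.sum_apply]

lemma eucNorm_smul' (c : ℝ) (v : V3) : eucNorm (c • v) = |c| * eucNorm v := by
  unfold eucNorm dot
  have : ∑ i, (c • v) i * (c • v) i = c^2 * ∑ i, v i * v i := by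
    rw [Finset.mul_sum]; apply Finset.sum_congr rfl; intro j _; simp; ring
  rw [this, Real.sqrt_mul (sq_nonneg c), Real.sqrt_sq_eq_abs]

lemma eucNorm_pos' (v : V3) (hv : v ≠ 0) : 0 < eucNorm v := by
  apply Real.sqrt_pos.2
  have : ∃ i, v i ≠ 0 := by
    by_contra h; push_neg at h; exact hv (funext h)
  obtain ⟨i, hi⟩ := this
  calc (0:ℝ) < v i * v i := mul_self_pos.2 hi
    _ ≤ ∑ j, v j * v j := Finset.single_le_sum (fun j _ => mul_self_nonneg (v j)) (Finset.mem_univ i)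

/-- arc-length field-line integration in logical coordinates:
if x_t = Φ(x̂_t) is an arc-length integral curve of the 2-form push-forward B
of B̂, then the logical curve satisfies dx̂/dt = B̂(x̂)/|DΦ(x̂) B̂(x̂)|. -/
theorem field_line_logical_coordinates_arclength
    (U : Set V3) (hU : IsOpen U) (Φ : V3 → V3)
    (hΦ : ContDiffOn ℝ 1 Φ U) (hinj : Set.InjOn Φ U)
    (hdet : ∀ x ∈ U, 0 < (jac Φ x).det)
    (Bhat : V3 → V3) (hBhat : ContinuousOn Bhat U)
    (hnz : ∀ x ∈ U, (jac Φ x).mulVec (Bhat x) ≠ 0)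
    (B : V3 → V3)
    (hpush : ∀ x ∈ U, B (Φ x) = ((jac Φ x).det)⁻¹ • (jac Φ x).mulVec (Bhat x))
    (I : Set ℝ) (xc : ℝ → V3)
    (hmem : ∀ t ∈ I, xc t ∈ U)
    (hdiff : ∀ t ∈ I, DifferentiableAt ℝ xc t)
    (hflow : ∀ t ∈ I, HasDerivAt (fun s => Φ (xc s))
      ((eucNorm (B (Φ (xc t))))⁻¹ • B (Φ (xc t))) t) :
    ∀ t ∈ I, HasDerivAt xc
      ((eucNorm ((jac Φ (xc t)).mulVec (Bhat (xc t))))⁻¹ • Bhat (xc t)) t := by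
  intro t ht
  have hxU := hmem t ht
  set x := xc t with hx
  have hΦd : DifferentiableAt ℝ Φ x :=
    (hΦ.contDiffAt (hU.mem_nhds hxU)).differentiableAt one_ne_zero
  set L := fderiv ℝ Φ x with hLdef
  have hL : HasFDerivAt Φ L x := hΦd.hasFDerivAt
  have hJ : ∀ v, (jac Φ x).mulVec v = L v := jac_mulVec_eq Φ x L hL
  have hchain : HasDerivAt (fun s => Φ (xc s)) (L (deriv xc t)) t :=
    hL.comp_hasDerivAt t (hdiff t ht).hasDerivAt
  have heq : L (deriv xc t) = (eucNorm (B (Φ x)))⁻¹ • B (Φ x) :=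
    hchain.unique (hflow t ht)
  set M := jac Φ x with hM
  set w := M.mulVec (Bhat x) with hw
  set d := M.det with hd
  have hd0 : 0 < d := hdet x hxU
  have hw0 : w ≠ 0 := hnz x hxU
  set n := eucNorm w with hn
  have hn0 : 0 < n := eucNorm_pos' w hw0
  have hB : B (Φ x) = d⁻¹ • w := hpush x hxU
  have hnormB : eucNorm (B (Φ x)) = d⁻¹ * n := by
    rw [hB, eucNorm_smul', abs_of_pos (inv_pos.2 hd0)]
  have hrhs : (eucNorm (B (Φ x)))⁻¹ • B (Φ x) = n⁻¹ • w := by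
    rw [hnormB, hB, smul_smul]
    congr 1
    field_simp
  have hkey : M.mulVec (deriv xc t) = M.mulVec (n⁻¹ • Bhat x) := by
    rw [hJ, hJ, heq, hrhs, L.map_smul, ← hJ]
  have hdetu : IsUnit M.det := (hd0.ne').isUnit
  have hderiv : deriv xc t = n⁻¹ • Bhat x := by
    have := congrArg (M⁻¹.mulVec) hkey
    rwa [Matrix.mulVec_mulVec, Matrix.mulVec_mulVec, Matrix.nonsing_inv_mul M hdetu,
      Matrix.one_mulVec, Matrix.one_mulVec] at this
  have := (hdiff t ht).hasDerivAt
  rw [hderiv] at this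
  exact this

end
end
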